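/- If the infinite binary sequence x = x_1x_2... is eventually periodic with minimal period k, then lim_{n→∞} Σ(x_1...x_n)/n³ = 1/(3k). -/

import Mathlib

open Filter

/-- Number of occurrences of `ξ` as a factor of `w` (occurrence at position `i`
means `ξ = w_{i+1}...w_{i+|ξ|}`). -/
def occ (w ξ : List Bool) : ℕ :=
  ((List.range w.length).filter (fun i => ξ.isPrefixOf (w.drop i))).length

/-- `ℓ`-fold concatenation `η^ℓ` of the word `η`. -/
def wpow (η : List Bool) (ℓ : ℕ) : List Bool := (List.replicate ℓ η).flatten

/-- The Kamae–Xue complexity `Σ(w) = Σ_{ξ ∈ {0,1}^+} |w|_ξ²`.  Since only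
factors of `w` contribute nonzero terms, the sum is taken over the (finite) set
of nonempty sublists of `w`, which contains all factors of `w`. -/
def kxSum (w : List Bool) : ℕ :=
  ∑ ξ ∈ w.sublists.toFinset.filter (fun ξ => ξ ≠ []), (occ w ξ) ^ 2

/-- `Λ(w) = max{|η|²(ℓ+1)³ : η nonempty, ℓ ≥ 1, η^ℓ a factor of w}`. -/
noncomputable def Lam (w : List Bool) : ℕ :=
  sSup {m | ∃ η ℓ, η ≠ ([] : List Bool) ∧ 1 ≤ ℓ ∧ wpow η ℓ <:+: w ∧
    m = η.length ^ 2 * (ℓ + 1) ^ 3}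

/-- A nonempty word is prime (primitive) if it is not a proper power. -/
def IsPrimeWord (η : List Bool) : Prop :=
  η ≠ [] ∧ ∀ ζ ℓ, 2 ≤ ℓ → η ≠ wpow ζ ℓ

/-- `|v|_{ξ,m}`: occurrences of `ξ` in `v` ending in the last `m` positions. -/
def occEnd (v ξ : List Bool) (m : ℕ) : ℕ :=
  ((List.range v.length).filter
    (fun i => ξ.isPrefixOf (v.drop i) && decide (v.length < i + ξ.length + m))).length

/-- The prefix `x_1 x_2 ⋯ x_n` of the infinite sequence `x`. -/
def pref (x : ℕ → Bool) (n : ℕ) : List Bool := (List.range n).map x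

def lcp : List Bool → List Bool → ℕ
  | a :: u, b :: v => if a = b then lcp u v + 1 else 0
  | _, _ => 0

lemma lcp_le_left : ∀ u v : List Bool, lcp u v ≤ u.length
  | [], _ => by simp [lcp]
  | _ :: _, [] => by simp [lcp]
  | a :: u, b :: v => by
    by_cases h : a = b <;> simp [lcp, h] <;> exact lcp_le_left u v

lemma lcp_le_right : ∀ u v : List Bool, lcp u v ≤ v.length
  | [], _ => by simp [lcp]
  | _ :: _, [] => by simp [lcp]
  | a :: u, b :: v => by
    by_cases h : a = b <;> simp [lcp, h] <;> exact lcp_le_right u v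

lemma take_lcp_eq : ∀ u v : List Bool, u.take (lcp u v) = v.take (lcp u v)
  | [], v => by simp [lcp]
  | _ :: _, [] => by simp [lcp]
  | a :: u, b :: v => by
    by_cases h : a = b <;> simp [lcp, h]
    exact take_lcp_eq u v

lemma length_le_lcp : ∀ (ξ u v : List Bool), ξ <+: u → ξ <+: v → ξ.length ≤ lcp u v
  | [], _, _, _, _ => by simp
  | c :: ξ, u, v, h1, h2 => by
    obtain ⟨s, rfl⟩ := h1
    obtain ⟨t, h2'⟩ := h2
    match v, h2' with
    | _, rfl =>
      have := length_le_lcp ξ (ξ ++ s) (ξ ++ t) ⟨s, rfl⟩ ⟨t, rfl⟩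
      simpa [lcp] using this

lemma take_prefix_right (u v : List Bool) (m : ℕ) (hm : m ≤ lcp u v) :
    u.take m <+: v := by
  have h1 : u.take m = (u.take (lcp u v)).take m := by
    rw [List.take_take, min_eq_left hm]
  rw [h1, take_lcp_eq u v, List.take_take, min_eq_left hm]
  exact List.take_prefix _ _

lemma card_common (w : List Bool) (u v : List Bool) (hu : u <:+ w) :
    ((w.sublists.toFinset.filter (fun ξ => ξ ≠ [])).filter
      (fun ξ => ξ.isPrefixOf u ∧ ξ.isPrefixOf v)).card = lcp u v := by
  have himg : (w.sublists.toFinset.filter (fun ξ => ξ ≠ [])).filter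
      (fun ξ => ξ.isPrefixOf u ∧ ξ.isPrefixOf v)
      = (Finset.Icc 1 (lcp u v)).image (fun m => u.take m) := by
    ext ξ
    simp only [Finset.mem_filter, Finset.mem_image, Finset.mem_Icc, List.mem_toFinset,
      List.mem_sublists, List.isPrefixOf_iff_prefix]
    constructor
    · rintro ⟨⟨-, hne⟩, h1, h2⟩
      refine ⟨ξ.length, ⟨?_, length_le_lcp ξ u v h1 h2⟩, (List.prefix_iff_eq_take.mp h1).symm⟩
      cases ξ with
      | nil => exact absurd rfl hne
      | cons a l => simp
    · rintro ⟨m, ⟨hm1, hm2⟩, rfl⟩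
      have hmu : m ≤ u.length := le_trans hm2 (lcp_le_left u v)
      have h1 : u.take m <+: u := List.take_prefix _ _
      refine ⟨⟨?_, ?_⟩, h1, take_prefix_right u v m hm2⟩
      · exact ((h1.isInfix.trans hu.isInfix).sublist)
      · intro hnil
        have : (u.take m).length = m := by simp [hmu]
        rw [hnil] at this
        simp at this
        omega
  rw [himg, Finset.card_image_of_injOn ?_, Nat.card_Icc]
  · omega
  intro a ha b hb hab
  simp only [Finset.coe_Icc, Set.mem_Icc] at ha hb
  have ha' : a ≤ u.length := le_trans ha.2 (lcp_le_left u v)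
  have hb' : b ≤ u.length := le_trans hb.2 (lcp_le_left u v)
  have := congrArg List.length hab
  simpa [ha', hb'] using this

lemma list_filter_length (p : ℕ → Bool) (n : ℕ) :
    ((List.range n).filter p).length = ∑ i ∈ Finset.range n, if p i then 1 else 0 := by
  induction n with
  | zero => simp
  | succ n ih =>
    rw [List.range_succ, List.filter_append, Finset.sum_range_succ,
      List.length_append, ih]
    congr 1
    by_cases h : p n = true <;> simp [h]

lemma occ_eq (w ξ : List Bool) :
    occ w ξ = ∑ i ∈ Finset.range w.length, if ξ.isPrefixOf (w.drop i) then 1 else 0 :=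
  list_filter_length _ _

lemma my_ite_mul_ite (p q : Prop) [Decidable p] [Decidable q] :
    (if p then (1:ℕ) else 0) * (if q then 1 else 0) = if p ∧ q then 1 else 0 := by
  by_cases hp : p <;> by_cases hq : q <;> simp [hp, hq]

theorem kxSum_eq (w : List Bool) :
    kxSum w = ∑ i ∈ Finset.range w.length, ∑ j ∈ Finset.range w.length,
      lcp (w.drop i) (w.drop j) := by
  unfold kxSum
  have h1 : ∀ ξ, occ w ξ ^ 2 = ∑ i ∈ Finset.range w.length, ∑ j ∈ Finset.range w.length,
      if (ξ.isPrefixOf (w.drop i) ∧ ξ.isPrefixOf (w.drop j)) then 1 else 0 := by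
    intro ξ
    rw [pow_two, occ_eq, Finset.sum_mul_sum _ _ _ _]
    refine Finset.sum_congr rfl fun i _ => Finset.sum_congr rfl fun j _ => ?_
    exact my_ite_mul_ite _ _
  simp_rw [h1]
  rw [Finset.sum_comm]
  refine Finset.sum_congr rfl fun i hi => ?_
  rw [Finset.sum_comm]
  refine Finset.sum_congr rfl fun j hj => ?_
  rw [← Finset.card_filter]
  exact card_common w (w.drop i) (w.drop j) (List.drop_suffix _ _)

lemma lcp_eq_min : ∀ u v : List Bool,
    (∀ t, t < u.length → t < v.length → u[t]? = v[t]?) →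
    lcp u v = min u.length v.length
  | [], v, _ => by simp [lcp]
  | _ :: _, [], _ => by simp [lcp]
  | a :: u, b :: v, h => by
    have h0 : a = b := by
      have := h 0 (by simp) (by simp)
      simpa using this
    have ih := lcp_eq_min u v (fun t ht ht' => by
      have := h (t+1) (by simpa using ht) (by simpa using ht')
      simpa using this)
    simp [lcp, h0, ih, Nat.succ_min_succ]

lemma lcp_le_of_ne : ∀ (u v : List Bool) (t : ℕ), u[t]? ≠ v[t]? → lcp u v ≤ t
  | [], v, t, h => by simp [lcp]
  | _ :: _, [], t, h => by simp [lcp]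
  | a :: u, b :: v, t, h => by
    by_cases hab : a = b
    · match t with
      | 0 => exact absurd (by simp [hab]) h
      | t + 1 =>
        have := lcp_le_of_ne u v t (by simpa using h)
        simp [lcp, hab]; omega
    · simp [lcp, hab]

lemma pref_getElem? (x : ℕ → Bool) (n t : ℕ) :
    (pref x n)[t]? = if t < n then some (x t) else none := by
  unfold pref
  rw [List.getElem?_map]
  by_cases h : t < n
  · rw [List.getElem?_range h]; simp [h]
  · rw [List.getElem?_eq_none (by simpa using h)]; simp [h]

lemma pref_length (x : ℕ → Bool) (n : ℕ) : (pref x n).length = n := by simp [pref]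

lemma drop_pref_getElem? (x : ℕ → Bool) (n i t : ℕ) :
    ((pref x n).drop i)[t]? = if i + t < n then some (x (i + t)) else none := by
  rw [List.getElem?_drop, pref_getElem?]

def KXEvP (x : ℕ → Bool) (p : ℕ) : Prop := ∃ M, ∀ n, M ≤ n → x (n + p) = x n

lemma kx_evp_mul {x : ℕ → Bool} {p : ℕ} (h : KXEvP x p) (c : ℕ) : KXEvP x (c * p) := by
  obtain ⟨M, hM⟩ := h
  refine ⟨M, fun n hn => ?_⟩
  induction c with
  | zero => simp
  | succ c ih =>
    have : n + (c + 1) * p = (n + c * p) + p := by ring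
    rw [this, hM _ (by omega), ih]

lemma kx_evp_sub {x : ℕ → Bool} {a b : ℕ} (ha : KXEvP x a) (hb : KXEvP x b)
    (hle : b ≤ a) : KXEvP x (a - b) := by
  obtain ⟨Ma, hMa⟩ := ha
  obtain ⟨Mb, hMb⟩ := hb
  refine ⟨Ma + Mb, fun n hn => ?_⟩
  have h1 : x (n + (a - b) + b) = x (n + (a - b)) := hMb _ (by omega)
  have h2 : n + (a - b) + b = n + a := by omega
  rw [h2] at h1
  rw [← h1, hMa _ (by omega)]

lemma kx_evp_mod {x : ℕ → Bool} {a b : ℕ} (ha : KXEvP x a) (hb : KXEvP x b) :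
    KXEvP x (a % b) := by
  have h1 : a - a / b * b = a % b := Nat.sub_eq_of_eq_add (Nat.mod_add_div' a b).symm
  rw [← h1]
  exact kx_evp_sub ha (kx_evp_mul hb (a / b)) (Nat.div_mul_le_self a b)

lemma kx_evp_gcd {x : ℕ → Bool} : ∀ b a, KXEvP x a → KXEvP x b → KXEvP x (Nat.gcd b a) := by
  intro b
  induction b using Nat.strong_induction_on with
  | _ b ih =>
    intro a ha hb
    match b with
    | 0 => simpa using ha
    | b + 1 =>
      rw [Nat.gcd_rec]
      exact ih _ (Nat.mod_lt _ (by omega)) _ hb (kx_evp_mod ha hb)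

section Periodic

variable {x : ℕ → Bool} {k N : ℕ} (hk : 1 ≤ k)
  (hN : ∀ n, N ≤ n → x (n + k) = x n)
  (hmin : ∀ p, 1 ≤ p → (∃ M, ∀ n, M ≤ n → x (n + p) = x n) → k ≤ p)

include hN in
lemma kx_shift (c : ℕ) : ∀ n, N ≤ n → x (n + c * k) = x n := by
  intro n hn
  induction c with
  | zero => simp
  | succ c ih =>
    have : n + (c + 1) * k = (n + c * k) + k := by ring
    rw [this, hN _ (by omega), ih]

include hN in
lemma kx_same_res_le {i j : ℕ} (hij : i ≤ j) (hres : i % k = j % k)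
    (hi : N ≤ i) (t : ℕ) : x (i + t) = x (j + t) := by
  have hdvd : k ∣ j - i := (Nat.modEq_iff_dvd' hij).mp hres
  obtain ⟨c, hc⟩ := hdvd
  rw [Nat.mul_comm] at hc
  have hj : j + t = (i + t) + c * k := by omega
  rw [hj, kx_shift hN c _ (by omega)]

include hN in
lemma kx_same_res {i j : ℕ} (hres : i % k = j % k)
    (hi : N ≤ i) (hj : N ≤ j) (t : ℕ) : x (i + t) = x (j + t) := by
  rcases le_total i j with h | h
  · exact kx_same_res_le hN h hres hi t
  · exact (kx_same_res_le hN h hres.symm hj t).symm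

include hk hN hmin in
lemma kx_diff_res {i j : ℕ} (hres : i % k ≠ j % k)
    (hi : N ≤ i) (hj : N ≤ j) : ∃ t, t < k ∧ x (i + t) ≠ x (j + t) := by
  by_contra hcon
  push_neg at hcon
  -- all t < k agree, hence all t agree
  have hall : ∀ t, x (i + t) = x (j + t) := by
    intro t
    induction t using Nat.strong_induction_on with
    | _ t iht =>
      by_cases ht : t < k
      · exact hcon t ht
      · have h1 : x (i + t) = x (i + (t - k)) := by
          have : i + t = (i + (t - k)) + k := by omega
          rw [this, hN _ (by omega)]
        have h2 : x (j + t) = x (j + (t - k)) := by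
          have : j + t = (j + (t - k)) + k := by omega
          rw [this, hN _ (by omega)]
        rw [h1, h2, iht _ (by omega)]
  -- hence |j - i| is an eventual period
  have hne : i ≠ j := fun h => hres (h ▸ rfl)
  have key : ∀ a b : ℕ, a < b → (∀ t, x (a + t) = x (b + t)) → a % k = b % k := by
    intro a b hab hagree
    have hevp : KXEvP x (b - a) := by
      refine ⟨a, fun n hn => ?_⟩
      have h1 : n + (b - a) = b + (n - a) := by omega
      have h2 : n = a + (n - a) := by omega
      rw [h1, ← hagree (n - a), ← h2]
    have hgcd : KXEvP x (Nat.gcd k (b - a)) := kx_evp_gcd k (b - a) hevp ⟨N, hN⟩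
    have hgcdpos : 1 ≤ Nat.gcd k (b - a) := Nat.gcd_pos_of_pos_left _ (by omega)
    have h3 : k ≤ Nat.gcd k (b - a) := hmin _ hgcdpos hgcd
    have h4 : Nat.gcd k (b - a) ≤ k := Nat.gcd_le_left _ (by omega)
    have h5 : k ∣ b - a := by
      have : Nat.gcd k (b - a) = k := le_antisymm h4 h3
      rw [← this]; exact Nat.gcd_dvd_right _ _
    obtain ⟨c, hc⟩ := h5
    rw [Nat.mul_comm] at hc
    have : b = a + c * k := by omega
    rw [this, Nat.add_mul_mod_self_right]
  rcases lt_or_gt_of_ne hne with h | h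
  · exact hres (key i j h hall)
  · exact hres ((key j i h (fun t => (hall t).symm)).symm)

include hN in
lemma kx_lcp_same {n i j : ℕ} (hres : i % k = j % k) (hi : N ≤ i) (hj : N ≤ j) :
    lcp ((pref x n).drop i) ((pref x n).drop j) = min (n - i) (n - j) := by
  have hlen1 : ((pref x n).drop i).length = n - i := by simp [pref]
  have hlen2 : ((pref x n).drop j).length = n - j := by simp [pref]
  rw [← hlen1, ← hlen2]
  apply lcp_eq_min
  intro t ht ht'
  rw [hlen1] at ht; rw [hlen2] at ht'
  rw [drop_pref_getElem?, drop_pref_getElem?, if_pos (by omega), if_pos (by omega),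
    kx_same_res hN hres hi hj t]

include hk hN hmin in
lemma kx_lcp_diff {n i j : ℕ} (hres : i % k ≠ j % k) (hi : N ≤ i) (hj : N ≤ j) :
    lcp ((pref x n).drop i) ((pref x n).drop j) ≤ k := by
  obtain ⟨t, htk, hne⟩ := kx_diff_res hk hN hmin hres hi hj
  by_cases hcase : i + t < n ∧ j + t < n
  · refine le_trans (lcp_le_of_ne _ _ t ?_) (by omega)
    rw [drop_pref_getElem?, drop_pref_getElem?, if_pos hcase.1, if_pos hcase.2]
    simpa using hne
  · have h1 := lcp_le_left ((pref x n).drop i) ((pref x n).drop j)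
    have h2 := lcp_le_right ((pref x n).drop i) ((pref x n).drop j)
    have hlen1 : ((pref x n).drop i).length = n - i := by simp [pref]
    have hlen2 : ((pref x n).drop j).length = n - j := by simp [pref]
    omega

end Periodic

def resQ (k L : ℕ) : ℕ :=
  ∑ i ∈ Finset.range L, ∑ j ∈ Finset.range L, if i % k = j % k then 1 else 0

lemma resQ_eq (k L : ℕ) (hk : 1 ≤ k) :
    resQ k L = ∑ r ∈ Finset.range k,
      ((Finset.range L).filter (fun i => i % k = r)).card ^ 2 := by
  set c : ℕ → ℕ := fun r => ((Finset.range L).filter (fun i => i % k = r)).card with hc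
  have hmap : ∀ i ∈ Finset.range L, i % k ∈ Finset.range k := fun i _ =>
    Finset.mem_range.mpr (Nat.mod_lt _ (by omega))
  have h1 : resQ k L = ∑ i ∈ Finset.range L, c (i % k) := by
    unfold resQ
    refine Finset.sum_congr rfl fun i _ => ?_
    rw [hc]
    rw [← Finset.card_filter]
    congr 1
    ext j
    simp [eq_comm]
  rw [h1, ← Finset.sum_fiberwise_of_maps_to hmap (fun i => c (i % k))]
  refine Finset.sum_congr rfl fun r _ => ?_
  have : ∀ i ∈ (Finset.range L).filter (fun i => i % k = r), c (i % k) = c r := by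
    intro i hi
    rw [(Finset.mem_filter.mp hi).2]
  rw [Finset.sum_congr rfl this, Finset.sum_const, smul_eq_mul]
  simp [hc, pow_two]

lemma sum_fiber_card (k L : ℕ) (hk : 1 ≤ k) :
    ∑ r ∈ Finset.range k, ((Finset.range L).filter (fun i => i % k = r)).card = L := by
  rw [← Finset.card_eq_sum_card_fiberwise
    (fun i (_ : i ∈ Finset.range L) => Finset.mem_range.mpr (Nat.mod_lt _ (by omega))),
    Finset.card_range]

lemma fiber_card_le (k L r : ℕ) (hk : 1 ≤ k) :
    k * ((Finset.range L).filter (fun i => i % k = r)).card ≤ L + k := by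
  have hinj : Set.InjOn (fun i => i / k) ((Finset.range L).filter (fun i => i % k = r)) := by
    intro a ha b hb hab
    simp only [Finset.coe_filter, Set.mem_setOf_eq, Finset.mem_range] at ha hb
    have h1 := Nat.div_add_mod a k
    have h2 := Nat.div_add_mod b k
    simp only at hab
    rw [hab] at h1
    omega
  have hsub : ∀ i ∈ (Finset.range L).filter (fun i => i % k = r),
      i / k ∈ Finset.range (L / k + 1) := by
    intro i hi
    simp only [Finset.mem_filter, Finset.mem_range] at hi ⊢
    have := Nat.div_le_div_right (c := k) (le_of_lt hi.1)
    omega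
  have hcard := Finset.card_le_card_of_injOn _ hsub hinj
  rw [Finset.card_range] at hcard
  have h3 : k * (L / k + 1) ≤ L + k := by
    have h4 : L / k * k ≤ L := Nat.div_mul_le_self L k
    calc k * (L / k + 1) = L / k * k + k := by ring
      _ ≤ L + k := by omega
  calc k * _ ≤ k * (L / k + 1) := Nat.mul_le_mul_left _ hcard
    _ ≤ L + k := h3

lemma resQ_lower (k L : ℕ) (hk : 1 ≤ k) : L ^ 2 ≤ k * resQ k L := by
  set c : ℕ → ℕ := fun r => ((Finset.range L).filter (fun i => i % k = r)).card with hc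
  have hcs := sq_sum_le_card_mul_sum_sq (s := Finset.range k) (f := fun r => (c r : ℤ))
  rw [Finset.card_range] at hcs
  have h1 : (∑ r ∈ Finset.range k, (c r : ℤ)) = (L : ℤ) := by
    exact_mod_cast sum_fiber_card k L hk
  rw [h1] at hcs
  have h2 : (k : ℤ) * ∑ r ∈ Finset.range k, (c r : ℤ) ^ 2 = ((k * resQ k L : ℕ) : ℤ) := by
    rw [resQ_eq k L hk]
    push_cast
    ring
  rw [h2] at hcs
  exact_mod_cast hcs

lemma resQ_upper (k L : ℕ) (hk : 1 ≤ k) : k * resQ k L ≤ L * L + k * L := by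
  set c : ℕ → ℕ := fun r => ((Finset.range L).filter (fun i => i % k = r)).card with hc
  rw [resQ_eq k L hk, Finset.mul_sum]
  have h1 : ∀ r ∈ Finset.range k, k * c r ^ 2 ≤ (L + k) * c r := by
    intro r _
    rw [pow_two, ← Nat.mul_assoc]
    exact Nat.mul_le_mul_right _ (fiber_card_le k L r hk)
  calc ∑ r ∈ Finset.range k, k * c r ^ 2 ≤ ∑ r ∈ Finset.range k, (L + k) * c r :=
        Finset.sum_le_sum h1
    _ = (L + k) * L := by rw [← Finset.mul_sum, sum_fiber_card k L hk]
    _ = L * L + k * L := by ring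

lemma min_expand (n i j : ℕ) :
    (if True then min (n - i) (n - j) else 0) = min (n-i) (n-j) := rfl

lemma min_expand' (n i j : ℕ) :
    min (n - i) (n - j) = ∑ u ∈ Finset.range n, if i ≤ u ∧ j ≤ u then 1 else 0 := by
  rw [← Finset.card_filter]
  have : (Finset.range n).filter (fun u => i ≤ u ∧ j ≤ u) = Finset.Ico (max i j) n := by
    ext u
    simp only [Finset.mem_filter, Finset.mem_range, Finset.mem_Ico]
    omega
  rw [this, Nat.card_Ico]
  omega

lemma T_eq (k n : ℕ) :
    (∑ i ∈ Finset.range n, ∑ j ∈ Finset.range n,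
      if i % k = j % k then min (n - i) (n - j) else 0)
    = ∑ u ∈ Finset.range n, resQ k (u + 1) := by
  have h1 : ∀ i ∈ Finset.range n, ∀ j ∈ Finset.range n,
      (if i % k = j % k then min (n - i) (n - j) else 0)
      = ∑ u ∈ Finset.range n, if (i % k = j % k ∧ i ≤ u ∧ j ≤ u) then 1 else 0 := by
    intro i _ j _
    by_cases h : i % k = j % k
    · rw [if_pos h, min_expand']
      exact Finset.sum_congr rfl fun u _ => by simp [h]
    · rw [if_neg h]
      symm
      refine Finset.sum_eq_zero fun u _ => by simp [h]
  calc ∑ i ∈ Finset.range n, ∑ j ∈ Finset.range n,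
        (if i % k = j % k then min (n - i) (n - j) else 0)
      = ∑ i ∈ Finset.range n, ∑ j ∈ Finset.range n, ∑ u ∈ Finset.range n,
          if (i % k = j % k ∧ i ≤ u ∧ j ≤ u) then 1 else 0 := by
        refine Finset.sum_congr rfl fun i hi => Finset.sum_congr rfl fun j hj => h1 i hi j hj
    _ = ∑ u ∈ Finset.range n, ∑ i ∈ Finset.range n, ∑ j ∈ Finset.range n,
          if (i % k = j % k ∧ i ≤ u ∧ j ≤ u) then 1 else 0 := by
        rw [Finset.sum_congr rfl fun i (_ : i ∈ Finset.range n) => Finset.sum_comm]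
        exact Finset.sum_comm
    _ = ∑ u ∈ Finset.range n, resQ k (u + 1) := by
        refine Finset.sum_congr rfl fun u hu => ?_
        have hu' : u + 1 ≤ n := Finset.mem_range.mp hu
        unfold resQ
        rw [← Finset.sum_subset (Finset.range_subset_range.mpr hu')
          (fun i _ hi => Finset.sum_eq_zero fun j _ => by
            rw [Finset.mem_range] at hi; rw [if_neg]; push_neg; intro _ h; omega)]
        refine Finset.sum_congr rfl fun i hi => ?_
        rw [← Finset.sum_subset (Finset.range_subset_range.mpr hu')
          (fun j _ hj => by rw [Finset.mem_range] at hj; rw [if_neg]; push_neg; intro _ _; omega)]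
        refine Finset.sum_congr rfl fun j hj => ?_
        rw [Finset.mem_range] at hi hj
        by_cases h : i % k = j % k <;> simp [h] <;> omega

lemma kxV_eq (n : ℕ) : 6 * (∑ u ∈ Finset.range n, (u + 1) ^ 2) = 2*n^3 + 3*n^2 + n := by
  induction n with
  | zero => simp
  | succ n ih => rw [Finset.sum_range_succ, Nat.mul_add, ih]; ring

lemma sum_ind_le (n N c : ℕ) :
    (∑ i ∈ Finset.range n, if i < N then c else 0) ≤ N * c := by
  rw [← Finset.sum_filter]
  have hsub : (Finset.range n).filter (fun i => i < N) ⊆ Finset.range N := by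
    intro i hi
    simp only [Finset.mem_filter, Finset.mem_range] at hi ⊢
    exact hi.2
  calc (∑ _i ∈ (Finset.range n).filter (fun i => i < N), c)
      = ((Finset.range n).filter (fun i => i < N)).card * c := by
        rw [Finset.sum_const, smul_eq_mul]
    _ ≤ N * c := by
        have := Finset.card_le_card hsub
        rw [Finset.card_range] at this
        exact Nat.mul_le_mul_right _ this

lemma sum_pairs_small (n N : ℕ) :
    (∑ i ∈ Finset.range n, ∑ j ∈ Finset.range n,
      if i < N ∨ j < N then n else 0) ≤ 2 * N * (n * n) := by
  have hpt : ∀ i j : ℕ, (if i < N ∨ j < N then n else 0)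
      ≤ (if i < N then n else 0) + (if j < N then n else 0) := by
    intro i j
    by_cases hi : i < N <;> by_cases hj : j < N <;> simp [hi, hj]
  calc (∑ i ∈ Finset.range n, ∑ j ∈ Finset.range n, if i < N ∨ j < N then n else 0)
      ≤ ∑ i ∈ Finset.range n, ∑ j ∈ Finset.range n,
          ((if i < N then n else 0) + (if j < N then n else 0)) :=
        Finset.sum_le_sum fun i _ => Finset.sum_le_sum fun j _ => hpt i j
    _ = ∑ i ∈ Finset.range n, (n * (if i < N then n else 0)
          + ∑ j ∈ Finset.range n, (if j < N then n else 0)) := by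
        refine Finset.sum_congr rfl fun i _ => ?_
        rw [Finset.sum_add_distrib, Finset.sum_const, Finset.card_range, smul_eq_mul]
    _ = (∑ i ∈ Finset.range n, n * (if i < N then n else 0))
        + n * (∑ j ∈ Finset.range n, if j < N then n else 0) := by
        rw [Finset.sum_add_distrib, Finset.sum_const, Finset.card_range, smul_eq_mul]
    _ ≤ n * (N * n) + n * (N * n) := by
        have h1 := sum_ind_le n N n
        have h2 : (∑ i ∈ Finset.range n, n * (if i < N then n else 0))
            = n * ∑ i ∈ Finset.range n, (if i < N then n else 0) := by
          rw [Finset.mul_sum]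
        rw [h2]
        exact Nat.add_le_add (Nat.mul_le_mul_left _ h1) (Nat.mul_le_mul_left _ h1)
    _ = 2 * N * (n * n) := by ring

section Main

variable {x : ℕ → Bool} {k N : ℕ} (hk : 1 ≤ k)
  (hN : ∀ n, N ≤ n → x (n + k) = x n)
  (hmin : ∀ p, 1 ≤ p → (∃ M, ∀ n, M ≤ n → x (n + p) = x n) → k ≤ p)

include hk hN hmin in
lemma S_upper (n : ℕ) :
    (∑ i ∈ Finset.range n, ∑ j ∈ Finset.range n,
      lcp ((pref x n).drop i) ((pref x n).drop j))
    ≤ (∑ i ∈ Finset.range n, ∑ j ∈ Finset.range n,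
        if i % k = j % k then min (n - i) (n - j) else 0)
      + (k * (n * n) + 2 * N * (n * n)) := by
  have hpt : ∀ i j, i < n → j < n →
      lcp ((pref x n).drop i) ((pref x n).drop j)
      ≤ (if i % k = j % k then min (n - i) (n - j) else 0)
        + (k + (if i < N ∨ j < N then n else 0)) := by
    intro i j hi hj
    have hlen1 : ((pref x n).drop i).length = n - i := by simp [pref]
    have hlen2 : ((pref x n).drop j).length = n - j := by simp [pref]
    by_cases hres : i % k = j % k
    · have h1 := lcp_le_left ((pref x n).drop i) ((pref x n).drop j)
      have h2 := lcp_le_right ((pref x n).drop i) ((pref x n).drop j)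
      rw [if_pos hres]
      omega
    · rw [if_neg hres]
      by_cases hsm : i < N ∨ j < N
      · have h1 := lcp_le_left ((pref x n).drop i) ((pref x n).drop j)
        rw [if_pos hsm]
        omega
      · push_neg at hsm
        have := kx_lcp_diff hk hN hmin (n := n) hres hsm.1 hsm.2
        rw [if_neg (by push_neg; exact hsm)]
        omega
  calc (∑ i ∈ Finset.range n, ∑ j ∈ Finset.range n,
        lcp ((pref x n).drop i) ((pref x n).drop j))
      ≤ ∑ i ∈ Finset.range n, ∑ j ∈ Finset.range n,
          ((if i % k = j % k then min (n - i) (n - j) else 0)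
            + (k + (if i < N ∨ j < N then n else 0))) := by
        refine Finset.sum_le_sum fun i hi => Finset.sum_le_sum fun j hj => ?_
        exact hpt i j (Finset.mem_range.mp hi) (Finset.mem_range.mp hj)
    _ = (∑ i ∈ Finset.range n, ∑ j ∈ Finset.range n,
          if i % k = j % k then min (n - i) (n - j) else 0)
        + ((∑ i ∈ Finset.range n, ∑ j ∈ Finset.range n, k)
          + ∑ i ∈ Finset.range n, ∑ j ∈ Finset.range n,
              (if i < N ∨ j < N then n else 0)) := by
        rw [← Finset.sum_add_distrib, ← Finset.sum_add_distrib]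
        refine Finset.sum_congr rfl fun i _ => ?_
        rw [← Finset.sum_add_distrib, ← Finset.sum_add_distrib]
    _ ≤ _ := by
        have h1 : (∑ _i ∈ Finset.range n, ∑ _j ∈ Finset.range n, k) = k * (n * n) := by
          simp only [Finset.sum_const, Finset.card_range, smul_eq_mul]; ring
        have h2 := sum_pairs_small n N
        rw [h1]
        omega

include hN in
lemma S_lower (n : ℕ) :
    (∑ i ∈ Finset.range n, ∑ j ∈ Finset.range n,
      if i % k = j % k then min (n - i) (n - j) else 0)
    ≤ (∑ i ∈ Finset.range n, ∑ j ∈ Finset.range n,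
        lcp ((pref x n).drop i) ((pref x n).drop j))
      + 2 * N * (n * n) := by
  have hpt : ∀ i j, i < n → j < n →
      (if i % k = j % k then min (n - i) (n - j) else 0)
      ≤ lcp ((pref x n).drop i) ((pref x n).drop j)
        + (if i < N ∨ j < N then n else 0) := by
    intro i j hi hj
    by_cases hres : i % k = j % k
    · by_cases hsm : i < N ∨ j < N
      · rw [if_pos hres, if_pos hsm]
        omega
      · push_neg at hsm
        rw [if_pos hres, kx_lcp_same hN hres hsm.1 hsm.2]
        omega
    · rw [if_neg hres]
      omega
  calc (∑ i ∈ Finset.range n, ∑ j ∈ Finset.range n,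
        if i % k = j % k then min (n - i) (n - j) else 0)
      ≤ ∑ i ∈ Finset.range n, ∑ j ∈ Finset.range n,
          (lcp ((pref x n).drop i) ((pref x n).drop j)
            + (if i < N ∨ j < N then n else 0)) := by
        refine Finset.sum_le_sum fun i hi => Finset.sum_le_sum fun j hj => ?_
        exact hpt i j (Finset.mem_range.mp hi) (Finset.mem_range.mp hj)
    _ = (∑ i ∈ Finset.range n, ∑ j ∈ Finset.range n,
          lcp ((pref x n).drop i) ((pref x n).drop j))
        + ∑ i ∈ Finset.range n, ∑ j ∈ Finset.range n,
            (if i < N ∨ j < N then n else 0) := by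
        rw [← Finset.sum_add_distrib]
        exact Finset.sum_congr rfl fun i _ => Finset.sum_add_distrib
    _ ≤ _ := by
        have h2 := sum_pairs_small n N
        omega

end Main

section Assemble

variable {x : ℕ → Bool} {k N : ℕ} (hk : 1 ≤ k)
  (hN : ∀ n, N ≤ n → x (n + k) = x n)
  (hmin : ∀ p, 1 ≤ p → (∃ M, ∀ n, M ≤ n → x (n + p) = x n) → k ≤ p)

include hk in
lemma T_bounds (n : ℕ) :
    (∑ u ∈ Finset.range n, (u + 1) ^ 2)
      ≤ k * (∑ i ∈ Finset.range n, ∑ j ∈ Finset.range n,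
          if i % k = j % k then min (n - i) (n - j) else 0)
    ∧ k * (∑ i ∈ Finset.range n, ∑ j ∈ Finset.range n,
          if i % k = j % k then min (n - i) (n - j) else 0)
      ≤ (∑ u ∈ Finset.range n, (u + 1) ^ 2) + k * (n * n) := by
  rw [T_eq k n, Finset.mul_sum]
  constructor
  · exact Finset.sum_le_sum fun u _ => resQ_lower k (u + 1) hk
  · have h1 : ∀ u ∈ Finset.range n, k * resQ k (u + 1) ≤ (u + 1) ^ 2 + k * (u + 1) := by
      intro u _
      have := resQ_upper k (u + 1) hk
      have h2 : (u + 1) * (u + 1) = (u + 1) ^ 2 := (pow_two _).symm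
      omega
    calc (∑ u ∈ Finset.range n, k * resQ k (u + 1))
        ≤ ∑ u ∈ Finset.range n, ((u + 1) ^ 2 + k * (u + 1)) := Finset.sum_le_sum h1
      _ = (∑ u ∈ Finset.range n, (u + 1) ^ 2) + k * (∑ u ∈ Finset.range n, (u + 1)) := by
          rw [Finset.sum_add_distrib, Finset.mul_sum]
      _ ≤ (∑ u ∈ Finset.range n, (u + 1) ^ 2) + k * (n * n) := by
          have h3 : (∑ u ∈ Finset.range n, (u + 1)) ≤ n * n := by
            calc (∑ u ∈ Finset.range n, (u + 1)) ≤ ∑ _u ∈ Finset.range n, n :=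
                  Finset.sum_le_sum fun u hu => Finset.mem_range.mp hu
              _ = n * n := by rw [Finset.sum_const, Finset.card_range, smul_eq_mul]
          exact Nat.add_le_add_left (Nat.mul_le_mul_left _ h3) _

include hk hN hmin in
lemma grand_bounds (n : ℕ) :
    2 * n ^ 3 ≤ 6 * k * (∑ i ∈ Finset.range n, ∑ j ∈ Finset.range n,
        lcp ((pref x n).drop i) ((pref x n).drop j)) + (4 + 6*k + 6*k*k + 12*k*N) * (n * n)
    ∧ 6 * k * (∑ i ∈ Finset.range n, ∑ j ∈ Finset.range n,
        lcp ((pref x n).drop i) ((pref x n).drop j))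
      ≤ 2 * n ^ 3 + (4 + 6*k + 6*k*k + 12*k*N) * (n * n) := by
  set Sn := (∑ i ∈ Finset.range n, ∑ j ∈ Finset.range n,
    lcp ((pref x n).drop i) ((pref x n).drop j)) with hSn
  set Tn := (∑ i ∈ Finset.range n, ∑ j ∈ Finset.range n,
    if i % k = j % k then min (n - i) (n - j) else 0) with hTn
  set Vn := (∑ u ∈ Finset.range n, (u + 1) ^ 2) with hVn
  have hSu : Sn ≤ Tn + (k * (n * n) + 2 * N * (n * n)) := S_upper hk hN hmin n
  have hSl : Tn ≤ Sn + 2 * N * (n * n) := S_lower hN n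
  have hTb := T_bounds hk (k := k) n
  have hV := kxV_eq n
  rw [← hTn, ← hVn] at hTb
  rw [← hVn] at hV
  obtain ⟨hT1, hT2⟩ := hTb
  constructor
  · -- 2n³ ≤ 6Vn ≤ 6kTn ≤ 6kSn + 12kN n²
    have c1 : k * Tn ≤ k * Sn + k * (2 * N * (n * n)) := by
      calc k * Tn ≤ k * (Sn + 2 * N * (n * n)) := Nat.mul_le_mul_left _ hSl
        _ = k * Sn + k * (2 * N * (n * n)) := by ring
    nlinarith [hV, hT1, c1]
  · have c2 : k * Sn ≤ k * Tn + k * (k * (n * n) + 2 * N * (n * n)) := by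
      calc k * Sn ≤ k * (Tn + (k * (n * n) + 2 * N * (n * n))) := Nat.mul_le_mul_left _ hSu
        _ = k * Tn + k * (k * (n * n) + 2 * N * (n * n)) := by ring
    nlinarith [hV, hT2, c2]

end Assemble


/-- if `x` is eventually periodic with minimal period `k`, then
`lim_{n→∞} Σ(x_1...x_n)/n³ = 1/(3k)`. -/
theorem kxSum_tendsto_of_eventually_periodic (x : ℕ → Bool) (k : ℕ) (hk : 1 ≤ k)
    (hper : ∃ N, ∀ n, N ≤ n → x (n + k) = x n)
    (hmin : ∀ p, 1 ≤ p → (∃ N, ∀ n, N ≤ n → x (n + p) = x n) → k ≤ p) :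
    Filter.Tendsto (fun n => (kxSum (pref x n) : ℝ) / (n : ℝ) ^ 3)
      atTop (nhds (1 / (3 * (k : ℝ)))) := by
  obtain ⟨N, hN⟩ := hper
  have hid : ∀ n : ℕ, kxSum (pref x n) = ∑ i ∈ Finset.range n, ∑ j ∈ Finset.range n,
      lcp ((pref x n).drop i) ((pref x n).drop j) := by
    intro n
    have h := kxSum_eq (pref x n)
    rwa [pref_length] at h
  set D : ℕ := 4 + 6*k + 6*k*k + 12*k*N with hD
  have hb : ∀ n : ℕ, 2 * n ^ 3 ≤ 6 * k * kxSum (pref x n) + D * (n * n)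
      ∧ 6 * k * kxSum (pref x n) ≤ 2 * n ^ 3 + D * (n * n) := by
    intro n
    rw [hid n, hD]
    exact grand_bounds hk hN hmin n
  set c : ℝ := (D : ℝ) / (6 * k) with hc
  have hkR : (0:ℝ) < (k:ℝ) := by exact_mod_cast hk
  have h6k : (0:ℝ) < 6 * (k:ℝ) := by linarith
  have hg : Filter.Tendsto (fun n : ℕ => 1/(3*(k:ℝ)) - c / n) atTop
      (nhds (1 / (3 * (k:ℝ)))) := by
    have h0 := tendsto_const_div_atTop_nhds_zero_nat c
    have := Filter.Tendsto.sub (tendsto_const_nhds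
      (x := 1/(3*(k:ℝ))) (f := atTop (α := ℕ))) h0
    simpa using this
  have hh : Filter.Tendsto (fun n : ℕ => 1/(3*(k:ℝ)) + c / n) atTop
      (nhds (1 / (3 * (k:ℝ)))) := by
    have h0 := tendsto_const_div_atTop_nhds_zero_nat c
    have := Filter.Tendsto.add (tendsto_const_nhds
      (x := 1/(3*(k:ℝ))) (f := atTop (α := ℕ))) h0
    simpa using this
  refine tendsto_of_tendsto_of_tendsto_of_le_of_le' hg hh ?_ ?_
  · -- lower bound eventually
    refine Filter.eventually_atTop.mpr ⟨1, fun n hn => ?_⟩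
    have hnR : (0:ℝ) < (n:ℝ) := by exact_mod_cast hn
    have hn3 : (0:ℝ) < (n:ℝ)^3 := by positivity
    have hcast : 2 * (n:ℝ)^3 ≤ 6 * k * (kxSum (pref x n) : ℝ) + D * (n*n) := by
      exact_mod_cast (hb n).1
    rw [le_div_iff₀ hn3]
    have e1 : (1/(3*(k:ℝ)) - c / n) * (n:ℝ)^3 = (2*(n:ℝ)^3 - D*((n:ℝ)*(n:ℝ)))/(6*(k:ℝ)) := by
      rw [hc]
      field_simp
      ring
    rw [e1, div_le_iff₀ h6k]
    nlinarith [hcast]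
  · refine Filter.eventually_atTop.mpr ⟨1, fun n hn => ?_⟩
    have hnR : (0:ℝ) < (n:ℝ) := by exact_mod_cast hn
    have hn3 : (0:ℝ) < (n:ℝ)^3 := by positivity
    have hcast : 6 * k * (kxSum (pref x n) : ℝ) ≤ 2 * (n:ℝ)^3 + D * (n*n) := by
      exact_mod_cast (hb n).2
    rw [div_le_iff₀ hn3]
    have e1 : (1/(3*(k:ℝ)) + c / n) * (n:ℝ)^3 = (2*(n:ℝ)^3 + D*((n:ℝ)*(n:ℝ)))/(6*(k:ℝ)) := by
      rw [hc]
      field_simp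
      ring
    rw [e1, le_div_iff₀ h6k]
    nlinarith [hcast]
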